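/- Let S be a finite set of k ≥ 2 distinct positive integers with smallest element s_1 and largest element s_k. Then CM(S) ≤ 2 + ⌊log₂(s_k − s_1)⌋. -/

import Mathlib

/-- The Cookie Monster number of a finite set `S` of jar contents: the least `n`
for which there exist positive move amounts `a_1, …, a_n` such that every `s ∈ S`
is the sum of a subset of the move amounts. -/
noncomputable def CM (S : Finset ℕ) : ℕ :=
  sInf {n : ℕ | ∃ a : Fin n → ℕ, (∀ i, 0 < a i) ∧
    ∀ s ∈ S, ∃ I : Finset (Fin n), ∑ i ∈ I, a i = s}

lemma exists_subset_sum_two_pow (n : ℕ) : ∀ m < 2 ^ n,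
    ∃ I : Finset ℕ, I ⊆ Finset.range n ∧ ∑ i ∈ I, 2 ^ i = m := by
  induction n with
  | zero => intro m hm; interval_cases m; exact ⟨∅, by simp⟩
  | succ n ih =>
    intro m hm
    by_cases h : m < 2 ^ n
    · obtain ⟨I, hI, hs⟩ := ih m h
      exact ⟨I, hI.trans (Finset.range_subset_range.2 (Nat.le_succ n)), hs⟩
    · push_neg at h
      obtain ⟨I, hI, hs⟩ := ih (m - 2 ^ n) (by omega)
      refine ⟨insert n I, ?_, ?_⟩
      · intro x hx
        rcases Finset.mem_insert.1 hx with rfl | hx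
        · exact Finset.self_mem_range_succ x
        · exact (Finset.range_subset_range.2 (Nat.le_succ n)) (hI hx)
      · rw [Finset.sum_insert (fun hn => by simpa using hI hn), hs]
        omega

/-- `CM(S) ≤ 2 + ⌊log₂ (s_k − s_1)⌋` where `s_1` and `s_k` are the smallest and
largest elements of a set `S` with at least two elements. -/
theorem cm_le_log_diameter (S : Finset ℕ) (hpos : ∀ s ∈ S, 0 < s)
    (hcard : 2 ≤ S.card) (hne : S.Nonempty) :
    CM S ≤ 2 + Nat.log 2 (S.max' hne - S.min' hne) := by
  set L := Nat.log 2 (S.max' hne - S.min' hne) with hL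
  apply Nat.sInf_le
  refine ⟨fun i => if i.1 = 0 then S.min' hne else 2 ^ (i.1 - 1), ?_, ?_⟩
  · intro i
    dsimp only
    split
    · exact hpos _ (S.min'_mem hne)
    · positivity
  · intro s hs
    have hmin : S.min' hne ≤ s := S.min'_le s hs
    have hdiff : s - S.min' hne < 2 ^ (L + 1) := by
      calc s - S.min' hne ≤ S.max' hne - S.min' hne :=
            Nat.sub_le_sub_right (S.le_max' s hs) _
        _ < 2 ^ (L + 1) := by
            rcases Nat.eq_zero_or_pos (S.max' hne - S.min' hne) with h0 | h0
            · rw [h0]; positivity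
            · exact Nat.lt_pow_succ_log_self (by norm_num) _
    obtain ⟨I, hI, hsum⟩ := exists_subset_sum_two_pow (L + 1) _ hdiff
    refine ⟨insert ⟨0, by omega⟩ (I.attach.image fun i =>
      (⟨i.1 + 1, by have := Finset.mem_range.1 (hI i.2); omega⟩ : Fin (2 + L))), ?_⟩
    rw [Finset.sum_insert, Finset.sum_image]
    · have h1 : ∑ i ∈ I.attach, (fun j : Fin (2 + L) =>
          if j.1 = 0 then S.min' hne else 2 ^ (j.1 - 1))
          ⟨i.1 + 1, by have := Finset.mem_range.1 (hI i.2); omega⟩ = s - S.min' hne := by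
        rw [← hsum]
        rw [← Finset.sum_attach I (fun i => 2 ^ i)]
        apply Finset.sum_congr rfl
        intro i _
        simp
      simp only [h1]
      show S.min' hne + (s - S.min' hne) = s
      omega
    · intro a _ b _ h
      exact Subtype.ext (Nat.succ.inj (congrArg Fin.val h))
    · simp [Fin.ext_iff]
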